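/- Let $E_0 > 0$, $v > 0$, $W_0 \in \mathbb{C}$ with $W_0 \neq 0$, let $U \subseteq \mathbb{C}$ be an open neighborhood of $E_0$, and let $S$ be holomorphic on $U$, real-valued on $U \cap \mathbb{R}$, with $S'(E_0) = T > 0$. Then for every $M > T^{-1}$ and every $r > 0$ there exists $h_0 > 0$ such that for all $h \in (0,h_0)$ there exists $E \in \mathbb{C}$ with $|\operatorname{Re} E - E_0| \le r h \log(1/h)$, $-M h \log(1/h) \le \operatorname{Im} E \le 0$, and $C_0(E;h) = 1$. In other words, the rectangle $R_h(M)$ contains a pseudo-resonance for all sufficiently small $h$. -/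

import Mathlib

open Filter Asymptotics
open scoped Topology

/-- Existence of pseudo-resonances: if `S` is holomorphic near `E₀`, real on the reals, with
`S'(E₀) = T > 0`, then for every `M > T⁻¹` and `r > 0`, for all `h` small enough the rectangle
`R_h(M) = E₀ + h log(1/h)[-r,r] + i[-M h log(1/h), 0]` contains a solution of `C₀(E;h) = 1`. -/

private lemma aux_re (p T ε r h la lh x : ℝ) (hh : 0 < h) (hT : 0 < T) (hlh : 0 < lh)
    (hr : 0 < r) (hε0 : 0 ≤ ε) (hεr : ε ≤ r/8) (hL : 0 < la + lh)
    (key : |x| ≤ ε*(2*(h*(la+lh))) + p*h*T⁻¹)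
    (hc5 : p*T⁻¹ + (r/4)*la ≤ (r/2)*lh) : |x| ≤ r*h*lh := by
  have hX0 : 0 ≤ h*(la+lh) := (mul_pos hh hL).le
  have f1 : ε*(2*(h*(la+lh))) ≤ (r/4)*(h*(la+lh)) := by nlinarith
  have f2 : h*(p*T⁻¹ + (r/4)*la) ≤ h*((r/2)*lh) := mul_le_mul_of_nonneg_left hc5 hh.le
  have f3 : (0:ℝ) ≤ h*lh := by positivity
  nlinarith [key, f1, f2, f3]

private lemma aux_im (T ε M Mh h la lh y x : ℝ)
    (hh : 0 < h) (hL : 0 < la + lh) (hlh : 0 < lh)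
    (hy : |y| ≤ ε*(2*(h*(la+lh))))
    (hx : x = y - (h*(la+lh))*T⁻¹)
    (hεT : 2*ε ≤ T⁻¹)
    (hMh : T⁻¹ + 2*ε ≤ Mh)
    (hc4 : Mh*la ≤ (M-Mh)*lh) :
    -(M*h*lh) ≤ x ∧ x ≤ 0 := by
  have hX0 : 0 ≤ h*(la+lh) := (mul_pos hh hL).le
  have hy1 : y ≤ ε*(2*(h*(la+lh))) := le_of_abs_le hy
  have hy2 : -(ε*(2*(h*(la+lh)))) ≤ y := neg_le_of_abs_le hy
  constructor
  · have a1 : 0 ≤ (Mh - T⁻¹ - 2*ε) * (h*(la+lh)) :=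
      mul_nonneg (by linarith) hX0
    have a2 : h*(Mh*la) ≤ h*((M-Mh)*lh) := mul_le_mul_of_nonneg_left hc4 hh.le
    nlinarith [a1, a2]
  · have a1 : 0 ≤ (T⁻¹ - 2*ε) * (h*(la+lh)) := mul_nonneg (by linarith) hX0
    nlinarith [a1]

set_option maxHeartbeats 1000000 in
theorem stmt_5 (E0 v : ℝ) (hE0 : 0 < E0) (hv : 0 < v)
    (W0 : ℂ) (hW0 : W0 ≠ 0) (U : Set ℂ) (hU : IsOpen U) (hE0U : (E0 : ℂ) ∈ U)
    (S : ℂ → ℂ) (hS : DifferentiableOn ℂ S U)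
    (hreal : ∀ x : ℝ, (x : ℂ) ∈ U → (S x).im = 0)
    (T : ℝ) (hT : 0 < T) (hS' : HasDerivAt S (T : ℂ) (E0 : ℂ)) :
    ∀ M, T⁻¹ < M → ∀ r > 0, ∃ h0 > 0, ∀ h : ℝ, h ∈ Set.Ioo 0 h0 →
      ∃ E : ℂ, |E.re - E0| ≤ r * h * Real.log (1 / h) ∧
        -(M * h * Real.log (1 / h)) ≤ E.im ∧ E.im ≤ 0 ∧
        Complex.I * h * Real.pi * W0 * Complex.exp (Complex.I * S E / h) /
          (v * Real.sqrt E0) = 1 := by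
  intro M hM r hr
  have hπ := Real.pi_pos
  have hsq : 0 < Real.sqrt E0 := Real.sqrt_pos.mpr hE0
  have hTinv : (0:ℝ) < T⁻¹ := inv_pos.mpr hT
  have hT' : (T:ℂ) ≠ 0 := by exact_mod_cast hT.ne'
  -- strict derivative of S at E0
  have hanal : AnalyticAt ℂ S (E0:ℂ) := hS.analyticAt (hU.mem_nhds hE0U)
  have hstrict : HasStrictDerivAt S (T:ℂ) (E0:ℂ) := by
    have h2 : HasStrictDerivAt S (deriv S (E0:ℂ)) (E0:ℂ) :=
      hanal.hasStrictFDerivAt.hasStrictDerivAt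
    rwa [hS'.deriv] at h2
  set w0 : ℂ := S (E0:ℂ) with hw0def
  set S₀ : ℝ := (S (E0:ℂ)).re with hS0
  have hw0 : w0 = (S₀ : ℂ) := Complex.ext rfl (by simpa using hreal E0 hE0U)
  obtain ⟨g, hgw0, hinv, hev2⟩ : ∃ g : ℂ → ℂ, g w0 = (E0:ℂ) ∧
      HasStrictDerivAt g ((T:ℂ))⁻¹ w0 ∧ ∀ᶠ w in 𝓝 w0, S (g w) = w :=
    ⟨hstrict.localInverse S (T:ℂ) (E0:ℂ) hT',
      (hstrict.hasStrictFDerivAt_equiv hT').localInverse_apply_image,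
      hstrict.to_localInverse hT',
      (hstrict.hasStrictFDerivAt_equiv hT').eventually_right_inverse⟩
  -- choice of ε
  set ε := min (r/8) (min ((M - T⁻¹)/4) (T⁻¹/2)) with hεdef
  have hε : 0 < ε := by
    refine lt_min (by linarith) (lt_min (by linarith) (by linarith))
  have hεr : ε ≤ r/8 := min_le_left _ _
  have hεM : ε ≤ (M - T⁻¹)/4 := (min_le_right _ _).trans (min_le_left _ _)
  have hεT : ε ≤ T⁻¹/2 := (min_le_right _ _).trans (min_le_right _ _)
  have hεT2 : 2*ε ≤ T⁻¹ := by linarith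
  -- little-o estimate and right inverse, on a ball of radius δ
  have hlo : (fun w => g w - g w0 - (w - w0) • ((T:ℂ))⁻¹) =o[𝓝 w0] (fun w => w - w0) :=
    hasDerivAt_iff_isLittleO.mp hinv.hasDerivAt
  have hev1 : ∀ᶠ w in 𝓝 w0, ‖g w - g w0 - (w - w0) • ((T:ℂ))⁻¹‖ ≤ ε * ‖w - w0‖ := hlo.def hε
  obtain ⟨δ, hδ, hball⟩ := Metric.eventually_nhds_iff.mp (hev1.and hev2)
  -- constants
  have hW0' : 0 < ‖W0‖ := by
    simpa using (norm_pos_iff.mpr hW0)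
  set a0 : ℝ := v * Real.sqrt E0 / (Real.pi * ‖W0‖) with ha0def
  have ha0 : 0 < a0 := by positivity
  set la := Real.log a0 with hladef
  set Mh := (M + T⁻¹)/2 with hMhdef
  have hMh1 : 0 < M - Mh := by rw [hMhdef]; linarith
  have hMh2 : T⁻¹ + 2*ε ≤ Mh := by rw [hMhdef]; linarith
  -- tendsto facts as h → 0⁺
  have tlog : Tendsto (fun h : ℝ => Real.log (1/h)) (𝓝[>] (0:ℝ)) atTop := by
    have h2 : Tendsto (fun h : ℝ => -Real.log h) (𝓝[>] (0:ℝ)) atTop :=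
      tendsto_neg_atBot_atTop.comp Real.tendsto_log_nhdsGT_zero
    refine h2.congr fun h => ?_
    rw [one_div, Real.log_inv]
  have tid : Tendsto (fun h : ℝ => h) (𝓝[>] (0:ℝ)) (𝓝 0) :=
    tendsto_id.mono_left nhdsWithin_le_nhds
  have thlog : Tendsto (fun h : ℝ => h * Real.log (1/h)) (𝓝[>] (0:ℝ)) (𝓝 0) := by
    have h1 : Tendsto (fun h : ℝ => h * Real.log h) (𝓝[>] (0:ℝ)) (𝓝 0) := by
      have := (Real.continuous_mul_log.tendsto 0).mono_left
        (nhdsWithin_le_nhds : 𝓝[>] (0:ℝ) ≤ 𝓝 0)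
      simpa using this
    have h2 := h1.neg
    rw [neg_zero] at h2
    refine h2.congr fun h => ?_
    rw [one_div, Real.log_inv]; ring
  have thla : Tendsto (fun h : ℝ => h * la) (𝓝[>] (0:ℝ)) (𝓝 0) := by
    simpa using tid.mul_const la
  -- eventual conditions
  have hcond : ∀ᶠ h in 𝓝[>] (0:ℝ), h < 1 ∧ Real.pi - la ≤ Real.log (1/h) ∧
      2*(h*la + h*Real.log (1/h)) < δ ∧ Mh * la ≤ (M - Mh) * Real.log (1/h) ∧
      Real.pi * T⁻¹ + (r/4)*la ≤ (r/2) * Real.log (1/h) := by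
    have c2 : ∀ᶠ h in 𝓝[>] (0:ℝ), h < 1 := tid.eventually_lt_const one_pos
    have c3 : ∀ᶠ h in 𝓝[>] (0:ℝ), Real.pi - la ≤ Real.log (1/h) :=
      tlog.eventually_ge_atTop _
    have c4 : ∀ᶠ h in 𝓝[>] (0:ℝ), 2*(h*la + h*Real.log (1/h)) < δ := by
      have t4 : Tendsto (fun h : ℝ => 2*(h*la + h*Real.log (1/h))) (𝓝[>] (0:ℝ)) (𝓝 0) := by
        have := (thla.add thlog).const_mul (2:ℝ)
        simpa using this
      exact t4.eventually_lt_const hδ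
    have c5 : ∀ᶠ h in 𝓝[>] (0:ℝ), Mh * la ≤ (M - Mh) * Real.log (1/h) := by
      filter_upwards [tlog.eventually_ge_atTop (Mh * la / (M - Mh))] with h hh
      have := mul_le_mul_of_nonneg_left hh hMh1.le
      rwa [mul_div_cancel₀ _ hMh1.ne'] at this
    have c6 : ∀ᶠ h in 𝓝[>] (0:ℝ),
        Real.pi * T⁻¹ + (r/4)*la ≤ (r/2) * Real.log (1/h) := by
      filter_upwards [tlog.eventually_ge_atTop ((Real.pi * T⁻¹ + (r/4)*la) / (r/2))] with h hh
      have hr2 : (0:ℝ) < r/2 := by linarith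
      have := mul_le_mul_of_nonneg_left hh hr2.le
      rwa [mul_div_cancel₀ _ hr2.ne'] at this
    filter_upwards [c2, c3, c4, c5, c6] with h h2 h3 h4 h5 h6
    exact ⟨h2, h3, h4, h5, h6⟩
  obtain ⟨h0, hh0, hsub⟩ := mem_nhdsGT_iff_exists_Ioo_subset.mp hcond
  refine ⟨h0, hh0, fun h hh => ?_⟩
  obtain ⟨hh1, hc2, hc3, hc4, hc5⟩ := hsub ⟨hh.1, hh.2⟩
  have hh0' : 0 < h := hh.1
  set lh := Real.log (1/h) with hlhdef
  have hlh : 0 < lh := Real.log_pos (one_lt_one_div hh0' hh1)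
  have hL : Real.pi ≤ la + lh := by linarith
  have hLpos : 0 < la + lh := lt_of_lt_of_le hπ hL
  have hX0 : 0 < h*(la+lh) := mul_pos hh0' hLpos
  -- complex constants for this h
  have hch : (h:ℂ) ≠ 0 := by exact_mod_cast hh0'.ne'
  have hπc : ((Real.pi:ℝ):ℂ) ≠ 0 := by exact_mod_cast hπ.ne'
  set D : ℂ := Complex.I * h * Real.pi * W0 with hD
  have hDne : D ≠ 0 := by
    rw [hD]
    exact mul_ne_zero (mul_ne_zero (mul_ne_zero Complex.I_ne_zero hch) hπc) hW0
  have hvE : (0:ℝ) < v * Real.sqrt E0 := by positivity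
  set c : ℂ := ((v * Real.sqrt E0 : ℝ) : ℂ) / D with hcdef
  have hcne : c ≠ 0 := div_ne_zero (by exact_mod_cast hvE.ne') hDne
  have habs : ‖c‖ = a0 * (1/h) := by
    rw [hcdef, norm_div, hD]
    rw [norm_mul, norm_mul, norm_mul, Complex.norm_I, Complex.norm_real, Real.norm_eq_abs, Complex.norm_real, Real.norm_eq_abs,
      Complex.norm_real, Real.norm_eq_abs, abs_of_pos hh0', abs_of_pos hπ, abs_of_pos hvE, ha0def]
    field_simp
  have hLre : (Complex.log c).re = la + lh := by
    rw [Complex.log_re, habs, Real.log_mul ha0.ne' (by positivity : (1/h:ℝ) ≠ 0)]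
  set b := (Complex.log c).im with hbdef
  have hb : |b| ≤ Real.pi := by rw [hbdef, Complex.log_im]; exact Complex.abs_arg_le_pi c
  set k : ℤ := round ((S₀ - h*b)/(2*Real.pi*h)) with hk
  set w : ℂ := ((2*Real.pi*k*h : ℝ) : ℂ) + (-Complex.I) * (h:ℂ) * Complex.log c with hwdef
  have hwre : w.re = 2*Real.pi*k*h + h*b := by
    rw [hwdef]
    simp [Complex.add_re, Complex.mul_re, Complex.mul_im, Complex.I_re, Complex.I_im,
      Complex.ofReal_re, Complex.ofReal_im, hbdef]
  have hwim : w.im = -(h*(la+lh)) := by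
    have : w.im = -(h * (Complex.log c).re) := by
      rw [hwdef]
      simp [Complex.add_im, Complex.mul_im, Complex.mul_re, Complex.I_re, Complex.I_im,
        Complex.ofReal_re, Complex.ofReal_im]
    rw [this, hLre]
  have hρ : |w.re - S₀| ≤ Real.pi * h := by
    have h2πh : (0:ℝ) < 2*Real.pi*h := by positivity
    have hr1 : |(S₀ - h*b)/(2*Real.pi*h) - k| ≤ 1/2 := abs_sub_round _
    have hr2 : w.re - S₀ = ((S₀ - h*b)/(2*Real.pi*h) - k) * -(2*Real.pi*h) := by
      rw [hwre]
      field_simp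
      ring
    rw [hr2, abs_mul, abs_neg, abs_of_pos h2πh]
    calc |(S₀ - h*b)/(2*Real.pi*h) - k| * (2*Real.pi*h) ≤ (1/2)*(2*Real.pi*h) :=
          mul_le_mul_of_nonneg_right hr1 h2πh.le
      _ = Real.pi*h := by ring
  set u : ℂ := w - w0 with hu
  have hure : u.re = w.re - S₀ := by rw [hu, hw0]; simp
  have huim : u.im = w.im := by rw [hu, hw0]; simp
  have hπh : Real.pi * h ≤ h * (la + lh) := by
    calc Real.pi * h = h * Real.pi := by ring
      _ ≤ h * (la + lh) := mul_le_mul_of_nonneg_left hL hh0'.le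
  have habsu : ‖u‖ ≤ 2*(h*(la+lh)) := by
    refine (Complex.norm_le_abs_re_add_abs_im u).trans ?_
    rw [hure, huim, hwim, abs_neg, abs_of_pos hX0]
    linarith [hρ]
  have hdist : dist w w0 < δ := by
    rw [Complex.dist_eq]
    calc ‖w - w0‖ ≤ 2*(h*(la+lh)) := habsu
      _ = 2*(h*la + h*lh) := by ring
      _ < δ := hc3
  obtain ⟨hest, hriv⟩ := hball hdist
  set E := g w with hE
  rw [hgw0, smul_eq_mul] at hest
  set err : ℂ := E - ((E0:ℝ):ℂ) - u * ((T:ℂ))⁻¹ with herrdef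
  have herr : ‖err‖ ≤ ε * (2*(h*(la+lh))) := by
    refine hest.trans ?_
    exact mul_le_mul_of_nonneg_left habsu hε.le
  have hTc : ((T:ℂ))⁻¹ = ((T⁻¹ : ℝ) : ℂ) := by push_cast; ring
  have hmulre : (u * ((T:ℂ))⁻¹).re = u.re * T⁻¹ := by
    rw [hTc]; simp [Complex.mul_re]
  have hmulim : (u * ((T:ℂ))⁻¹).im = u.im * T⁻¹ := by
    rw [hTc]; simp [Complex.mul_im]
  have hre : E.re - E0 = err.re + (w.re - S₀) * T⁻¹ := by
    have h1 : err.re = E.re - E0 - (u * ((T:ℂ))⁻¹).re := by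
      rw [herrdef]; simp
    rw [h1, hmulre, hure]; ring
  have him : E.im = err.im + w.im * T⁻¹ := by
    have h1 : err.im = E.im - (u * ((T:ℂ))⁻¹).im := by
      rw [herrdef]; simp
    rw [h1, hmulim, huim]; ring
  have herre : |err.re| ≤ ε * (2*(h*(la+lh))) := (Complex.abs_re_le_norm err).trans herr
  have herrim : |err.im| ≤ ε * (2*(h*(la+lh))) := (Complex.abs_im_le_norm err).trans herr
  refine ⟨E, ?_, ?_, ?_, ?_⟩
  · -- real part
    have key : |E.re - E0| ≤ ε*(2*(h*(la+lh))) + Real.pi*h*T⁻¹ := by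
      rw [hre]
      refine (abs_add_le _ _).trans ?_
      have h2 : |(w.re - S₀)*T⁻¹| ≤ Real.pi*h*T⁻¹ := by
        rw [abs_mul, abs_of_pos hTinv]
        exact mul_le_mul_of_nonneg_right hρ hTinv.le
      exact add_le_add herre h2
    exact aux_re Real.pi T ε r h la lh _ hh0' hT hlh hr hε.le hεr hLpos key hc5
  · -- imaginary part lower bound
    have hx : E.im = err.im - (h*(la+lh))*T⁻¹ := by rw [him, hwim]; ring
    exact (aux_im T ε M Mh h la lh err.im E.im hh0' hLpos hlh herrim hx hεT2 hMh2 hc4).1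
  · -- imaginary part ≤ 0
    have hx : E.im = err.im - (h*(la+lh))*T⁻¹ := by rw [him, hwim]; ring
    exact (aux_im T ε M Mh h la lh err.im E.im hh0' hLpos hlh herrim hx hεT2 hMh2 hc4).2
  · -- the equation
    have hSEw : S E = w := hriv
    rw [hSEw]
    have hmul : Complex.I * w = (h:ℂ) * (Complex.log c + 2*Real.pi*k*Complex.I) := by
      rw [hwdef]
      push_cast
      linear_combination (-(h:ℂ) * Complex.log c) * Complex.I_mul_I
    have hIw : Complex.I * w / h = Complex.log c + 2*Real.pi*k*Complex.I := by
      rw [hmul, mul_div_cancel_left₀ _ hch]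
    rw [hIw, Complex.exp_add]
    have h2k : (2*(Real.pi:ℂ)*(k:ℂ)*Complex.I) = (k:ℂ)*(2*Real.pi*Complex.I) := by
      push_cast; ring
    rw [Complex.exp_log hcne, h2k, Complex.exp_int_mul_two_pi_mul_I, mul_one]
    have hvc : ((v:ℝ):ℂ) ≠ 0 := by exact_mod_cast hv.ne'
    have hsqc : ((Real.sqrt E0 : ℝ):ℂ) ≠ 0 := by exact_mod_cast hsq.ne'
    rw [hcdef, hD]
    push_cast
    field_simp
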